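/- Equal treatment of symmetric teams: let σ be a permutation of the teams such that M_{σ(i)σ(j)} = M_{ij} for all i, j and s_{σ(i)} = s_i for all i. Then the generalized row sum rating satisfies x_{σ(i)}(ε) = x_i(ε) for every team i and every ε > 0. In particular, two teams that achieved the same results against opponents of the same strength receive equal ratings. -/

import Mathlib

open Matrix Finset

/-- The Laplacian matrix of the matches matrix `M`:
`L i j = -M i j` for `i ≠ j` and `L i i = ∑_{j ≠ i} M i j`. -/
def lap {n : ℕ} (M : Matrix (Fin n) (Fin n) ℝ) : Matrix (Fin n) (Fin n) ℝ :=
  Matrix.of fun i j => if i = j then ∑ k ∈ Finset.univ.erase i, M i k else -M i j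

lemma lap_mulVec {n : ℕ} (M : Matrix (Fin n) (Fin n) ℝ) (hdiag : ∀ i, M i i = 0)
    (v : Fin n → ℝ) (i : Fin n) :
    (lap M *ᵥ v) i = (∑ k, M i k) * v i - ∑ j, M i j * v j := by
  have h1 : ∑ k ∈ Finset.univ.erase i, M i k = ∑ k, M i k := by
    rw [Finset.sum_erase_eq_sub (Finset.mem_univ i), hdiag, sub_zero]
  simp only [mulVec, dotProduct, lap, Matrix.of_apply]
  rw [← Finset.add_sum_erase _ _ (Finset.mem_univ i)]
  simp only [if_pos rfl]
  have h2 : ∑ j ∈ Finset.univ.erase i, (if i = j then ∑ k ∈ Finset.univ.erase i, M i k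
      else -M i j) * v j = -∑ j ∈ Finset.univ.erase i, M i j * v j := by
    rw [← Finset.sum_neg_distrib]
    apply Finset.sum_congr rfl
    intro j hj
    rw [if_neg (fun h => (Finset.ne_of_mem_erase hj) h.symm), neg_mul]
  rw [h2, h1]
  have h3 : ∑ j ∈ Finset.univ.erase i, M i j * v j = ∑ j, M i j * v j := by
    rw [Finset.sum_erase_eq_sub (Finset.mem_univ i), hdiag, zero_mul, sub_zero]
  rw [h3]; simp only [if_true]; ring

lemma lap_psd {n : ℕ} (M : Matrix (Fin n) (Fin n) ℝ)
    (hsymm : M.IsSymm) (hnonneg : ∀ i j, 0 ≤ M i j) (hdiag : ∀ i, M i i = 0)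
    (v : Fin n → ℝ) : 0 ≤ v ⬝ᵥ (lap M *ᵥ v) := by
  have h1 : v ⬝ᵥ (lap M *ᵥ v) = ∑ i, ∑ j, M i j * v i * (v i - v j) := by
    rw [dotProduct]
    refine Finset.sum_congr rfl fun i _ => ?_
    rw [lap_mulVec M hdiag]
    symm
    calc ∑ j, M i j * v i * (v i - v j)
        = ∑ j, (v i * v i * M i j - v i * (M i j * v j)) :=
          Finset.sum_congr rfl fun j _ => by ring
      _ = v i * v i * (∑ j, M i j) - v i * ∑ j, M i j * v j := by
          rw [Finset.sum_sub_distrib, ← Finset.mul_sum, ← Finset.mul_sum]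
      _ = v i * ((∑ k, M i k) * v i - ∑ j, M i j * v j) := by ring
  have h2 : v ⬝ᵥ (lap M *ᵥ v) = ∑ i, ∑ j, M i j * v j * (v j - v i) := by
    rw [h1, Finset.sum_comm]
    refine Finset.sum_congr rfl fun j _ => Finset.sum_congr rfl fun i _ => ?_
    have h : M i j = M j i := by
      have := congrFun (congrFun hsymm j) i
      simpa [Matrix.transpose_apply] using this
    rw [← h]
  have key : v ⬝ᵥ (lap M *ᵥ v) * 2 = ∑ i, ∑ j, M i j * (v i - v j)^2 := by
    rw [mul_two]
    nth_rewrite 1 [h1]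
    nth_rewrite 1 [h2]
    rw [← Finset.sum_add_distrib]
    refine Finset.sum_congr rfl fun i _ => ?_
    rw [← Finset.sum_add_distrib]
    refine Finset.sum_congr rfl fun j _ => ?_
    ring
  have hpos : 0 ≤ ∑ i, ∑ j, M i j * (v i - v j)^2 :=
    Finset.sum_nonneg fun i _ => Finset.sum_nonneg fun j _ =>
      mul_nonneg (hnonneg i j) (sq_nonneg _)
  linarith [key, hpos]

/-- Equal treatment of symmetric teams: if a permutation `σ` preserves the matches matrix
and the score vector, then it preserves the generalized row sum rating. -/
theorem grs_equal_treatment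
    (n : ℕ) (hn : 1 ≤ n) (M : Matrix (Fin n) (Fin n) ℝ)
    (hsymm : M.IsSymm) (hnonneg : ∀ i j, 0 ≤ M i j) (hdiag : ∀ i, M i i = 0)
    (σ : Equiv.Perm (Fin n))
    (hMσ : ∀ i j, M (σ i) (σ j) = M i j)
    (ε : ℝ) (hε : 0 < ε) (s x : Fin n → ℝ)
    (hsσ : ∀ i, s (σ i) = s i)
    (hx : (1 + ε • lap M) *ᵥ x = s) :
    ∀ i, x (σ i) = x i := by
  set A : Matrix (Fin n) (Fin n) ℝ := 1 + ε • lap M with hA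
  -- entries of A are permutation invariant
  have hAσ : ∀ i j, A (σ i) (σ j) = A i j := by
    intro i j
    have hlap : lap M (σ i) (σ j) = lap M i j := by
      simp only [lap, Matrix.of_apply]
      by_cases hij : i = j
      · subst hij
        rw [if_pos rfl, if_pos rfl]
        have e1 : ∑ k ∈ Finset.univ.erase (σ i), M (σ i) k = ∑ k, M (σ i) k := by
          rw [Finset.sum_erase_eq_sub (Finset.mem_univ _), hdiag, sub_zero]
        have e2 : ∑ k ∈ Finset.univ.erase i, M i k = ∑ k, M i k := by
          rw [Finset.sum_erase_eq_sub (Finset.mem_univ _), hdiag, sub_zero]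
        rw [e1, e2, ← Equiv.sum_comp σ (fun k => M (σ i) k)]
        exact Finset.sum_congr rfl fun k _ => hMσ i k
      · rw [if_neg (fun h => hij (σ.injective h)), if_neg hij, hMσ]
    simp only [hA, Matrix.add_apply, Matrix.smul_apply, Matrix.one_apply, hlap,
      EmbeddingLike.apply_eq_iff_eq]
  -- the permuted vector also solves the system
  have hy : A *ᵥ (fun i => x (σ i)) = s := by
    funext i
    have := congrFun hx (σ i)
    rw [hsσ i] at this
    rw [← this]
    simp only [mulVec, dotProduct]
    rw [← Equiv.sum_comp σ (fun k => A (σ i) k * x k)]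
    exact Finset.sum_congr rfl fun j _ => by rw [hAσ]
  -- A is injective
  have hinj : ∀ w : Fin n → ℝ, A *ᵥ w = 0 → w = 0 := by
    intro w hw
    have hdot : w ⬝ᵥ (A *ᵥ w) = 0 := by rw [hw, dotProduct_zero]
    have hexp : w ⬝ᵥ (A *ᵥ w) = w ⬝ᵥ w + ε * (w ⬝ᵥ (lap M *ᵥ w)) := by
      rw [hA, Matrix.add_mulVec, Matrix.one_mulVec, dotProduct_add,
        Matrix.smul_mulVec, dotProduct_smul, smul_eq_mul]
    have hpsd := lap_psd M hsymm hnonneg hdiag w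
    have hww : w ⬝ᵥ w ≤ 0 := by nlinarith
    have hnn : 0 ≤ w ⬝ᵥ w := Finset.sum_nonneg fun i _ => mul_self_nonneg (w i)
    have : w ⬝ᵥ w = 0 := le_antisymm hww hnn
    exact (dotProduct_self_eq_zero).mp this
  have hsub : A *ᵥ ((fun i => x (σ i)) - x) = 0 := by
    rw [Matrix.mulVec_sub, hy, hx, sub_self]
  have := hinj _ hsub
  intro i
  have := congrFun this i
  simpa [sub_eq_zero] using this
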